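/- For all q ∈ [0,1], with A = (q+1)/(q+2), the series Σ_{n=2}^∞ A^{n-2}/(n+q) converges and is at most 2·(log 4 − 1). -/

import Mathlib

open MeasureTheory intervalIntegral Real Set

/-- The integral of the comparison function. -/
lemma series_bound_integral : ∫ x in (0:ℝ)..1, (2 - Real.sqrt x)⁻¹ = 4 * Real.log 2 - 2 := by
  have hsqrt : ∀ x ∈ Set.Icc (0:ℝ) 1, Real.sqrt x ≤ 1 := by
    intro x hx
    rw [show (1:ℝ) = Real.sqrt 1 by simp]
    exact Real.sqrt_le_sqrt hx.2
  have hcont2 : ContinuousOn (fun x : ℝ => 2 - Real.sqrt x) (Set.Icc 0 1) :=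
    (continuous_const.sub Real.continuous_sqrt).continuousOn
  have hne : ∀ x ∈ Set.Icc (0:ℝ) 1, 2 - Real.sqrt x ≠ 0 := by
    intro x hx; have := hsqrt x hx; linarith
  have key := intervalIntegral.integral_eq_sub_of_hasDerivAt_of_le (f := fun x =>
      -2 * Real.sqrt x - 4 * Real.log (2 - Real.sqrt x))
      (f' := fun x => (2 - Real.sqrt x)⁻¹) (a := 0) (b := 1) zero_le_one
      (by
        apply ContinuousOn.sub
        · exact (continuous_const.mul Real.continuous_sqrt).continuousOn
        · exact continuous_const.continuousOn.mul (hcont2.log hne))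
      (by
        intro x hx
        have hx0 : 0 < x := hx.1
        have hs0 : 0 < Real.sqrt x := Real.sqrt_pos.mpr hx0
        have hs1 : Real.sqrt x ≤ 1 := by
          rw [show (1:ℝ) = Real.sqrt 1 by simp]
          exact Real.sqrt_le_sqrt hx.2.le
        have hne' : 2 - Real.sqrt x ≠ 0 := by linarith
        have hds : HasDerivAt Real.sqrt (1 / (2 * Real.sqrt x)) x :=
          Real.hasDerivAt_sqrt hx0.ne'
        have hd2 : HasDerivAt (fun x : ℝ => 2 - Real.sqrt x) (0 - 1 / (2 * Real.sqrt x)) x :=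
          (hasDerivAt_const x 2).sub hds
        have hdl : HasDerivAt (fun x : ℝ => Real.log (2 - Real.sqrt x))
            ((0 - 1 / (2 * Real.sqrt x)) / (2 - Real.sqrt x)) x := hd2.log hne'
        have := ((hds.const_mul (-2)).sub (hdl.const_mul 4))
        convert this using 1
        rfl
        field_simp
        ring
      )
      (by
        apply ContinuousOn.intervalIntegrable
        rw [Set.uIcc_of_le zero_le_one]
        exact hcont2.inv₀ hne)
  rw [key]
  simp only [Real.sqrt_one, Real.sqrt_zero]
  norm_num [Real.log_one]
  ring

/-- Pointwise bound: key inequality via Bernoulli. -/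
lemma series_bound_pointwise {h x : ℝ} (hh3 : 1/3 ≤ h) (hh2 : h ≤ 1/2)
    (hx0 : 0 ≤ x) (hx1 : x ≤ 1) :
    h * (1 - (1 - h) * x ^ h)⁻¹ ≤ (2 - Real.sqrt x)⁻¹ := by
  set s := Real.sqrt x with hs
  have hs0 : 0 ≤ s := Real.sqrt_nonneg x
  have hs1 : s ≤ 1 := by
    rw [hs, show (1:ℝ) = Real.sqrt 1 by simp]
    exact Real.sqrt_le_sqrt hx1
  have hxh0 : 0 ≤ x ^ h := Real.rpow_nonneg hx0 h
  have hxh1 : x ^ h ≤ 1 := Real.rpow_le_one hx0 hx1 (by linarith)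
  have hd1 : 0 < 1 - (1 - h) * x ^ h := by nlinarith
  have hd2 : (0:ℝ) < 2 - s := by linarith
  -- Bernoulli : x ^ h = (1 + (s - 1)) ^ (2 * h) ≤ 1 + 2 * h * (s - 1)
  have hxs : x ^ h = (1 + (s - 1)) ^ (2 * h) := by
    have : x = s ^ (2:ℕ) := (Real.sq_sqrt hx0).symm
    rw [show (1:ℝ) + (s - 1) = s by ring, this, ← Real.rpow_natCast s 2,
      ← Real.rpow_mul hs0]
    norm_num [mul_comm]
  have hB : x ^ h ≤ 1 + 2 * h * (s - 1) := by
    rw [hxs]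
    have := rpow_one_add_le_one_add_mul_self (s := s - 1) (by linarith) (p := 2 * h)
      (by linarith) (by linarith)
    linarith [this]
  rw [← one_div, ← one_div, ← mul_div_assoc, mul_one, div_le_div_iff₀ hd1 hd2]
  nlinarith [mul_nonneg (mul_nonneg (by linarith : (0:ℝ) ≤ h)
      (by linarith : (0:ℝ) ≤ 1 - s)) (by linarith : (0:ℝ) ≤ 1 - 2*h),
      mul_le_mul_of_nonneg_left hB (by linarith : (0:ℝ) ≤ 1 - h)]

theorem series_bound (q : ℝ) (hq : q ∈ Set.Icc (0:ℝ) 1) :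
    Summable (fun n : ℕ => ((q + 1) / (q + 2)) ^ n / ((n : ℝ) + 2 + q)) ∧
      (∑' n : ℕ, ((q + 1) / (q + 2)) ^ n / ((n : ℝ) + 2 + q)) ≤ 2 * (Real.log 4 - 1) := by
  obtain ⟨hq0, hq1⟩ := hq
  have hq2 : (0:ℝ) < q + 2 := by linarith
  have hA0 : 0 ≤ (q + 1) / (q + 2) := by positivity
  have hA1 : (q + 1) / (q + 2) < 1 := by rw [div_lt_one hq2]; linarith
  have hden : ∀ n : ℕ, (0:ℝ) < (n:ℝ) + 2 + q := by
    intro n; have : (0:ℝ) ≤ (n:ℝ) := Nat.cast_nonneg n; linarith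
  have hnonneg : ∀ n : ℕ, 0 ≤ ((q + 1) / (q + 2)) ^ n / ((n : ℝ) + 2 + q) := by
    intro n; positivity
  have hsum : Summable (fun n : ℕ => ((q + 1) / (q + 2)) ^ n / ((n : ℝ) + 2 + q)) := by
    apply Summable.of_nonneg_of_le hnonneg (fun n => ?_)
      (summable_geometric_of_lt_one hA0 hA1)
    rw [div_le_iff₀ (hden n)]
    nlinarith [pow_nonneg hA0 n, hden n]
  refine ⟨hsum, ?_⟩
  -- set h = 1/(q+2)
  set h : ℝ := 1 / (q + 2) with hhdef
  have hh0 : 0 < h := by positivity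
  have hh3 : 1/3 ≤ h := by
    rw [hhdef, div_le_div_iff₀ (by norm_num) hq2]; linarith
  have hh2 : h ≤ 1/2 := by
    rw [hhdef, div_le_div_iff₀ hq2 (by norm_num)]; linarith
  have hAh : (q + 1) / (q + 2) = 1 - h := by
    rw [hhdef]; field_simp; ring
  -- log 4 = 2 log 2
  have hlog4 : Real.log 4 = 2 * Real.log 2 := by
    rw [show (4:ℝ) = 2^2 by norm_num, Real.log_pow]; norm_num
  rw [show 2 * (Real.log 4 - 1) = 4 * Real.log 2 - 2 by rw [hlog4]; ring]
  apply Real.tsum_le_of_sum_range_le hnonneg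
  intro N
  -- each term equals an integral
  have hterm : ∀ i : ℕ, ((q + 1) / (q + 2)) ^ i / ((i : ℝ) + 2 + q)
      = ∫ x in (0:ℝ)..1, h * (1 - h) ^ i * x ^ ((i:ℝ) * h) := by
    intro i
    have hih : (0:ℝ) ≤ (i:ℝ) * h := by positivity
    rw [intervalIntegral.integral_const_mul,
      integral_rpow (Or.inl (by linarith : (-1:ℝ) < (i:ℝ) * h))]
    rw [Real.one_rpow, Real.zero_rpow (by positivity : (i:ℝ) * h + 1 ≠ 0), hAh]
    rw [hhdef] at *
    have hi2q : ((i:ℝ) + 2 + q) ≠ 0 := (hden i).ne'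
    field_simp
    ring
  have hintg : ∀ i : ℕ, IntervalIntegrable
      (fun x : ℝ => h * (1 - h) ^ i * x ^ ((i:ℝ) * h)) volume 0 1 := by
    intro i
    exact (intervalIntegral.intervalIntegrable_rpow (Or.inl (by positivity))).const_mul _
  have hsum_eq : ∑ i ∈ Finset.range N, ((q + 1) / (q + 2)) ^ i / ((i : ℝ) + 2 + q)
      = ∫ x in (0:ℝ)..1, ∑ i ∈ Finset.range N, h * (1 - h) ^ i * x ^ ((i:ℝ) * h) := by
    rw [intervalIntegral.integral_finset_sum (fun i _ => hintg i)]
    exact Finset.sum_congr rfl fun i _ => hterm i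
  rw [hsum_eq]
  have hGint : IntervalIntegrable
      (fun x : ℝ => (2 - Real.sqrt x)⁻¹) volume 0 1 := by
    apply ContinuousOn.intervalIntegrable
    rw [Set.uIcc_of_le zero_le_one]
    apply ContinuousOn.inv₀ (continuous_const.sub Real.continuous_sqrt).continuousOn
    intro x hx
    have : Real.sqrt x ≤ 1 := by
      rw [show (1:ℝ) = Real.sqrt 1 by simp]; exact Real.sqrt_le_sqrt hx.2
    simp only [Pi.sub_apply]; linarith
  calc (∫ x in (0:ℝ)..1, ∑ i ∈ Finset.range N, h * (1 - h) ^ i * x ^ ((i:ℝ) * h))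
      ≤ ∫ x in (0:ℝ)..1, (2 - Real.sqrt x)⁻¹ := by
        apply intervalIntegral.integral_mono_on zero_le_one
          (by
            have hs := IntervalIntegrable.sum (μ := volume) (a := (0:ℝ)) (b := (1:ℝ))
              (Finset.range N) (fun i _ => hintg i)
            have heq : (∑ i ∈ Finset.range N, fun x : ℝ => h * (1 - h) ^ i * x ^ ((i:ℝ) * h))
                = fun u : ℝ => ∑ i ∈ Finset.range N, h * (1 - h) ^ i * u ^ ((i:ℝ) * h) := by
              funext u; simp
            rwa [heq] at hs) hGint
        intro x hx
        obtain ⟨hx0, hx1⟩ := hx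
        have hxh0 : 0 ≤ x ^ h := Real.rpow_nonneg hx0 h
        have hxh1 : x ^ h ≤ 1 := Real.rpow_le_one hx0 hx1 hh0.le
        have hr0 : 0 ≤ (1 - h) * x ^ h := by nlinarith
        have hr1 : (1 - h) * x ^ h < 1 := by nlinarith
        have hrw : ∀ i : ℕ, h * (1 - h) ^ i * x ^ ((i:ℝ) * h)
            = h * ((1 - h) * x ^ h) ^ i := by
          intro i
          rw [mul_comm (i:ℝ) h, Real.rpow_mul hx0, Real.rpow_natCast, mul_pow]
          ring
        calc ∑ i ∈ Finset.range N, h * (1 - h) ^ i * x ^ ((i:ℝ) * h)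
            = h * ∑ i ∈ Finset.range N, ((1 - h) * x ^ h) ^ i := by
              rw [Finset.mul_sum]; exact Finset.sum_congr rfl fun i _ => hrw i
          _ ≤ h * (1 - (1 - h) * x ^ h)⁻¹ := by
              apply mul_le_mul_of_nonneg_left _ hh0.le
              rw [← tsum_geometric_of_lt_one hr0 hr1]
              exact Summable.sum_le_tsum _ (fun i _ => pow_nonneg hr0 i)
                (summable_geometric_of_lt_one hr0 hr1)
          _ ≤ (2 - Real.sqrt x)⁻¹ := series_bound_pointwise hh3 hh2 hx0 hx1
    _ = 4 * Real.log 2 - 2 := series_bound_integral
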